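/- Let η, λ, μ be real numbers in the admissible range 0 < η < λ < π − η, η − λ < μ < λ − η, and let ξ ∈ (0, π − λ − η). Set σ(ξ) = sin(λ+η)·sin(ξ+λ−η) / (sin(λ−η)·sin(ξ+λ+η)). Then the denominator σ(ξ)·sin(λ−η)·sin((λ−η−μ)/2) − sin(λ+η)·sin((λ−5η−μ)/2) is nonzero, and σ(ξ)·sin(2η)·sin((λ+3η+μ)/2) / (σ(ξ)·sin(λ−η)·sin((λ−η−μ)/2) − sin(λ+η)·sin((λ−5η−μ)/2)) = sin(ξ+λ−η)·sin((λ+3η+μ)/2) / (sin(λ−η)·sin(ξ+(λ+3η+μ)/2)). -/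

import Mathlib

open Real

lemma auxkey (x e u : ℝ) :
    Real.sin (x - e) * Real.sin u - Real.sin (x + e) * Real.sin (u - 2*e)
      = Real.sin (2*e) * Real.sin (x + e - u) := by
  simp only [Real.sin_add, Real.sin_sub, Real.cos_add, Real.cos_sub,
    Real.sin_two_mul, Real.cos_two_mul]
  linear_combination (-2 * Real.sin x * Real.cos e * Real.sin u) * Real.sin_sq_add_cos_sq e

/-- Parametric form of g(σ(ξ)) for the 20V model. -/
theorem stmt5 (η lam μ ξ : ℝ) (h1 : 0 < η) (h2 : η < lam) (h3 : lam < Real.pi - η)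
    (h4 : η - lam < μ) (h5 : μ < lam - η)
    (hξ : ξ ∈ Set.Ioo 0 (Real.pi - lam - η))
    (σ : ℝ) (hσ : σ = Real.sin (lam + η) * Real.sin (ξ + lam - η)
        / (Real.sin (lam - η) * Real.sin (ξ + lam + η))) :
    (σ * Real.sin (lam - η) * Real.sin ((lam - η - μ)/2)
        - Real.sin (lam + η) * Real.sin ((lam - 5*η - μ)/2)) ≠ 0 ∧
    σ * Real.sin (2*η) * Real.sin ((lam + 3*η + μ)/2)
      / (σ * Real.sin (lam - η) * Real.sin ((lam - η - μ)/2)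
        - Real.sin (lam + η) * Real.sin ((lam - 5*η - μ)/2))
      = Real.sin (ξ + lam - η) * Real.sin ((lam + 3*η + μ)/2)
        / (Real.sin (lam - η) * Real.sin (ξ + (lam + 3*η + μ)/2)) := by
  obtain ⟨hξ0, hξ1⟩ := hξ
  have hS1 : 0 < Real.sin (lam - η) := Real.sin_pos_of_pos_of_lt_pi (by linarith) (by linarith)
  have hS2 : 0 < Real.sin (ξ + lam + η) := Real.sin_pos_of_pos_of_lt_pi (by linarith) (by linarith)
  have hS3 : 0 < Real.sin (lam + η) := Real.sin_pos_of_pos_of_lt_pi (by linarith) (by linarith)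
  have hS4 : 0 < Real.sin (2*η) := Real.sin_pos_of_pos_of_lt_pi (by linarith) (by linarith)
  have hS5 : 0 < Real.sin (ξ + (lam + 3*η + μ)/2) :=
    Real.sin_pos_of_pos_of_lt_pi (by linarith) (by linarith)
  have key := auxkey (ξ + lam) η ((lam - η - μ)/2)
  have e1 : ξ + lam - η = (ξ + lam) - η := by ring
  have e2 : (lam - 5*η - μ)/2 = (lam - η - μ)/2 - 2*η := by ring
  have e3 : (ξ + lam) + η - (lam - η - μ)/2 = ξ + (lam + 3*η + μ)/2 := by ring
  have e4 : ξ + lam + η = (ξ + lam) + η := by ring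
  rw [e3] at key
  have hD : σ * Real.sin (lam - η) * Real.sin ((lam - η - μ)/2)
        - Real.sin (lam + η) * Real.sin ((lam - 5*η - μ)/2)
      = Real.sin (lam + η) * Real.sin (2*η) * Real.sin (ξ + (lam + 3*η + μ)/2)
        / Real.sin (ξ + lam + η) := by
    rw [hσ, e1, e2, e4]
    field_simp
    rw [show (ξ * 2 + (lam + η * 3 + μ)) / 2 = ξ + (lam + 3 * η + μ) / 2 by ring,
        show (lam - η - μ - η * 2 ^ 2) / 2 = (lam - η - μ) / 2 - 2 * η by ring,
        show η * 2 = 2 * η by ring]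
    linear_combination key
  have hDpos : 0 < σ * Real.sin (lam - η) * Real.sin ((lam - η - μ)/2)
        - Real.sin (lam + η) * Real.sin ((lam - 5*η - μ)/2) := by
    rw [hD]; positivity
  refine ⟨ne_of_gt hDpos, ?_⟩
  rw [hD, hσ, div_eq_div_iff (by positivity) (by positivity)]
  field_simp
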